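/- Suppose γ₀ ≠ 0 and γ₁ ≠ 0. Then the number of pairs (x₁, x₂) ∈ 𝔽_q × 𝔽_q with (x₁, x₂) ≠ (0, 0) satisfying both A(x₁, x₂) = 0 and B(x₁, x₂) = 0 is at most 6. -/

import Mathlib

set_option maxHeartbeats 1600000 in
theorem aux_key {K : Type*} [Field K] (i S A0 A1 Bb0 Bb1 G0 G1 B0 B1 B2 D0 D1 D2 : K)
    (hi : i ^ 2 = S)
    (hB0 : B0 = A0 + A1 * i) (hB1 : B1 = Bb0 + Bb1 * i) (hB2 : B2 = G0 + G1 * i)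
    (hD0 : D0 = A0 - A1 * i) (hD1 : D1 = Bb0 - Bb1 * i) (hD2 : D2 = G0 - G1 * i)
    (hB2ne : B2 ≠ 0) (hD2ne : D2 ≠ 0) :
    ∃ P : Polynomial K, P ≠ 0 ∧ P.natDegree ≤ 6 ∧
      ∀ a b : K, a ^ 2 - S * b ^ 2 ≠ 0 →
        (A0 + Bb0 * a + S * Bb1 * b + G0 * (a ^ 2 - S * b ^ 2)) * (a ^ 2 - S * b ^ 2)
          + a * (a ^ 2 + 3 * S * b ^ 2) = 0 →
        (A1 + Bb1 * a + Bb0 * b + G1 * (a ^ 2 - S * b ^ 2)) * (a ^ 2 - S * b ^ 2)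
          + b * (3 * a ^ 2 + S * b ^ 2) = 0 →
        P.eval (a + b * i) = 0 := by
  refine ⟨Polynomial.C (B2 * D2^2) * Polynomial.X ^ 6 + Polynomial.C (2 * B2 * D1 * D2) * Polynomial.X ^ 5 + Polynomial.C (B2 * D1^2 - B1 * D2 - B1 * B2 * D0 * D2) * Polynomial.X ^ 4 + Polynomial.C (1 - 2 * B2 * D0 + B2^2 * D0^2 - B1 * D1 - B1 * B2 * D0 * D1 - B0 * D2 - B0 * B2 * D0 * D2) * Polynomial.X ^ 3 + Polynomial.C (B1^2 * D0 - B0 * D1 - B0 * B2 * D0 * D1) * Polynomial.X ^ 2 + Polynomial.C (2 * B0 * B1 * D0) * Polynomial.X ^ 1 + Polynomial.C (B0^2 * D0) * Polynomial.X ^ 0, ?_, ?_, ?_⟩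
  · intro hP
    have hc6 : (Polynomial.C (B2 * D2^2) * Polynomial.X ^ 6 + Polynomial.C (2 * B2 * D1 * D2) * Polynomial.X ^ 5 + Polynomial.C (B2 * D1^2 - B1 * D2 - B1 * B2 * D0 * D2) * Polynomial.X ^ 4 + Polynomial.C (1 - 2 * B2 * D0 + B2^2 * D0^2 - B1 * D1 - B1 * B2 * D0 * D1 - B0 * D2 - B0 * B2 * D0 * D2) * Polynomial.X ^ 3 + Polynomial.C (B1^2 * D0 - B0 * D1 - B0 * B2 * D0 * D1) * Polynomial.X ^ 2 + Polynomial.C (2 * B0 * B1 * D0) * Polynomial.X ^ 1 + Polynomial.C (B0^2 * D0) * Polynomial.X ^ 0).coeff 6 = B2 * D2 ^ 2 := by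
      simp only [Polynomial.coeff_add, Polynomial.coeff_C_mul, Polynomial.coeff_X_pow]
      norm_num
    rw [hP] at hc6
    simp only [Polynomial.coeff_zero] at hc6
    exact mul_ne_zero hB2ne (pow_ne_zero 2 hD2ne) hc6.symm
  · compute_degree
  · intro a b hn hA hB
    have hx : (a + b * i) * (a - b * i) = a ^ 2 - S * b ^ 2 := by
      linear_combination (-(b ^ 2)) * hi
    have hxne : a + b * i ≠ 0 := fun h => hn (by rw [← hx, h, zero_mul])
    have h1 : (a + b * i) ^ 3 + (a ^ 2 - S * b ^ 2) * (B0 + B1 * (a + b * i) + B2 * (a ^ 2 - S * b ^ 2)) = 0 := by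
      linear_combination hA + i * hB + (3 * a * b^2 + a^2 * b * Bb1 - S * b^3 * Bb1 + i * b^3) * hi + (a ^ 2 - S * b ^ 2) * hB0 + (a ^ 2 - S * b ^ 2) * (a + b * i) * hB1
        + (a ^ 2 - S * b ^ 2) ^ 2 * hB2
    have h2n : (a ^ 2 - S * b ^ 2) * ((a ^ 2 - S * b ^ 2) ^ 2 + (D1 * (a + b * i) ^ 2 + D2 * (a + b * i) ^ 3) * (a ^ 2 - S * b ^ 2) + D0 * (a + b * i) ^ 3) = 0 := by
      linear_combination ((a + b * i) ^ 3) * hA - ((a + b * i) ^ 3 * i) * hB + (6 * a^4 * b^2 + a^4 * b^2 * Bb0 + a^5 * b * Bb1 - 3 * S * a^2 * b^4 - S * a^2 * b^4 * Bb0 - S * a^3 * b^3 * Bb1 + S^2 * b^6 + 8 * i * a^3 * b^3 + 2 * i * a^3 * b^3 * Bb0 + 2 * i * a^4 * b^2 * Bb1 - 2 * i * S * a * b^5 * Bb0 - 2 * i * S * a^2 * b^4 * Bb1 + 3 * i^2 * a^2 * b^4 + i^2 * a^2 * b^4 * Bb0 + i^2 * a^3 * b^3 * Bb1 + i^2 *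 S * b^6 - i^2 * S * b^6 * Bb0 - i^2 * S * a * b^5 * Bb1) * hi
        + (a ^ 2 - S * b ^ 2) ^ 2 * (a + b * i) ^ 2 * hD1 + (a ^ 2 - S * b ^ 2) ^ 2 * (a + b * i) ^ 3 * hD2 + (a ^ 2 - S * b ^ 2) * (a + b * i) ^ 3 * hD0
    have h2 : (a ^ 2 - S * b ^ 2) ^ 2 + (D1 * (a + b * i) ^ 2 + D2 * (a + b * i) ^ 3) * (a ^ 2 - S * b ^ 2) + D0 * (a + b * i) ^ 3 = 0 :=
      (mul_eq_zero.mp h2n).resolve_left hn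
    have h3 : (a ^ 2 - S * b ^ 2) * (B0 + B1 * (a + b * i) - B2 * D1 * (a + b * i) ^ 2 - B2 * D2 * (a + b * i) ^ 3) = (B2 * D0 - 1) * (a + b * i) ^ 3 := by
      linear_combination h1 - B2 * h2
    have h4 : ((B2 * D0 - 1) ^ 2 * (a + b * i) ^ 3 + (D1 + D2 * (a + b * i)) * (a + b * i) ^ 2 * (B0 + B1 * (a + b * i) - B2 * D1 * (a + b * i) ^ 2 - B2 * D2 * (a + b * i) ^ 3) * (B2 * D0 - 1) + D0 * (B0 + B1 * (a + b * i) - B2 * D1 * (a + b * i) ^ 2 - B2 * D2 * (a + b * i) ^ 3) ^ 2) * (a + b * i) ^ 3 = 0 := by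
      linear_combination (B0 + B1 * (a + b * i) - B2 * D1 * (a + b * i) ^ 2 - B2 * D2 * (a + b * i) ^ 3) ^ 2 * h2 + (-((a ^ 2 - S * b ^ 2) * (B0 + B1 * (a + b * i) - B2 * D1 * (a + b * i) ^ 2 - B2 * D2 * (a + b * i) ^ 3) + (B2 * D0 - 1) * (a + b * i) ^ 3)
        - (D1 * (a + b * i) ^ 2 + D2 * (a + b * i) ^ 3) * (B0 + B1 * (a + b * i) - B2 * D1 * (a + b * i) ^ 2 - B2 * D2 * (a + b * i) ^ 3)) * h3
    have h5 : ((B2 * D0 - 1) ^ 2 * (a + b * i) ^ 3 + (D1 + D2 * (a + b * i)) * (a + b * i) ^ 2 * (B0 + B1 * (a + b * i) - B2 * D1 * (a + b * i) ^ 2 - B2 * D2 * (a + b * i) ^ 3) * (B2 * D0 - 1) + D0 * (B0 + B1 * (a + b * i) - B2 * D1 * (a + b * i) ^ 2 - B2 * D2 * (a + b * i) ^ 3) ^ 2) = 0 := (mul_eq_zero.mp h4).resolve_right (pow_ne_zero 3 hxne)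
    simp only [Polynomial.eval_add, Polynomial.eval_mul, Polynomial.eval_pow,
      Polynomial.eval_C, Polynomial.eval_X]
    linear_combination h5

set_option maxHeartbeats 1600000 in
/-- odd characteristic: Suppose `γ₀ ≠ 0` and `γ₁ ≠ 0`. Then the number of
pairs `(x₁, x₂) ∈ 𝔽_q × 𝔽_q` with `(x₁, x₂) ≠ (0, 0)` satisfying both `A(x₁, x₂) = 0` and
`B(x₁, x₂) = 0` is at most `6`, where
`A = (α₀ + β₀X₁ + sβ₁X₂ + γ₀(X₁² − sX₂²))(X₁² − sX₂²) + X₁(X₁² + 3sX₂²)` and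
`B = (α₁ + β₁X₁ + β₀X₂ + γ₁(X₁² − sX₂²))(X₁² − sX₂²) + X₂(3X₁² + sX₂²)`. -/
theorem stmt_13 (q : ℕ) (hq : IsPrimePow q) (hodd : Odd q)
    (F : Type*) [Field F] [Fintype F] [DecidableEq F] (hF : Fintype.card F = q)
    (s : F) (hs : ¬IsSquare s)
    (α₀ α₁ β₀ β₁ γ₀ γ₁ : F) (hγ₀ : γ₀ ≠ 0) (hγ₁ : γ₁ ≠ 0) :
    (Finset.univ.filter fun p : F × F => p ≠ (0, 0) ∧
        (α₀ + β₀ * p.1 + s * β₁ * p.2 + γ₀ * (p.1 ^ 2 - s * p.2 ^ 2)) *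
            (p.1 ^ 2 - s * p.2 ^ 2) + p.1 * (p.1 ^ 2 + 3 * s * p.2 ^ 2) = 0 ∧
        (α₁ + β₁ * p.1 + β₀ * p.2 + γ₁ * (p.1 ^ 2 - s * p.2 ^ 2)) *
            (p.1 ^ 2 - s * p.2 ^ 2) + p.2 * (3 * p.1 ^ 2 + s * p.2 ^ 2) = 0).card ≤ 6 := by
  classical
  have hs0 : ∀ t : F, t ^ 2 ≠ s := fun t h => hs ⟨t, by rw [← h]; ring⟩
  have hirr : Irreducible (Polynomial.X ^ 2 - Polynomial.C s : Polynomial F) :=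
    X_pow_sub_C_irreducible_of_prime Nat.prime_two hs0
  haveI := Fact.mk hirr
  set K := AdjoinRoot (Polynomial.X ^ 2 - Polynomial.C s : Polynomial F) with hK
  set i : K := AdjoinRoot.root _ with hidef
  set φ : F →+* K := algebraMap F K with hφdef
  have hφinj : Function.Injective φ := φ.injective
  have hi : i ^ 2 = φ s := by
    have h0 := AdjoinRoot.eval₂_root (Polynomial.X ^ 2 - Polynomial.C s : Polynomial F)
    simp only [Polynomial.eval₂_sub, Polynomial.eval₂_pow, Polynomial.eval₂_X,
      Polynomial.eval₂_C] at h0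
    rw [hφdef, AdjoinRoot.algebraMap_eq]
    rw [sub_eq_zero] at h0
    exact h0
  have hzero : ∀ u v : F, φ u + φ v * i = 0 → u = 0 ∧ v = 0 := by
    intro u v h
    by_cases hv : v = 0
    · refine ⟨?_, hv⟩
      rw [hv, map_zero, zero_mul, add_zero] at h
      exact hφinj (h.trans (map_zero φ).symm)
    · exfalso
      have hvK : φ v ≠ 0 := fun h0 => hv (hφinj (h0.trans (map_zero φ).symm))
      have hieq : i = -φ u / φ v := by
        rw [eq_div_iff hvK]
        linear_combination h
      apply hs0 (-u / v)
      apply hφinj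
      rw [map_pow, map_div₀, map_neg, ← hieq, hi]
  have hB2 : φ γ₀ + φ γ₁ * i ≠ 0 := fun h => hγ₀ ((hzero _ _ h).1)
  have hD2 : φ γ₀ - φ γ₁ * i ≠ 0 := by
    intro h
    have h' : φ γ₀ + φ (-γ₁) * i = 0 := by rw [map_neg]; linear_combination h
    exact hγ₁ (neg_eq_zero.mp ((hzero _ _ h').2))
  obtain ⟨P, hP0, hPdeg, hProot⟩ :=
    aux_key i (φ s) (φ α₀) (φ α₁) (φ β₀) (φ β₁) (φ γ₀) (φ γ₁)
      (φ α₀ + φ α₁ * i) (φ β₀ + φ β₁ * i) (φ γ₀ + φ γ₁ * i)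
      (φ α₀ - φ α₁ * i) (φ β₀ - φ β₁ * i) (φ γ₀ - φ γ₁ * i)
      hi rfl rfl rfl rfl rfl rfl hB2 hD2
  refine le_trans (Finset.card_le_card_of_injOn (t := P.roots.toFinset)
      (fun p : F × F => φ p.1 + φ p.2 * i) ?_ ?_) ?_
  · intro p hp
    simp only [Finset.mem_coe, Finset.mem_filter, Finset.mem_univ, true_and] at hp
    obtain ⟨hne, hA, hB⟩ := hp
    have hn : p.1 ^ 2 - s * p.2 ^ 2 ≠ 0 := by
      intro h
      rcases eq_or_ne p.2 0 with h2 | h2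
      · apply hne
        have h1 : p.1 ^ 2 = 0 := by rw [h2] at h; linear_combination h
        exact Prod.ext (pow_eq_zero_iff two_ne_zero |>.mp h1) h2
      · exact hs0 (p.1 / p.2) (by field_simp; linear_combination h)
    have hnK : (φ p.1) ^ 2 - (φ s) * (φ p.2) ^ 2 ≠ 0 := by
      intro h
      apply hn
      apply hφinj
      rw [map_sub, map_mul, map_pow, map_pow, map_zero]
      exact h
    have hAK := congrArg φ hA
    simp only [map_add, map_mul, map_sub, map_pow, map_zero, map_ofNat] at hAK
    have hBK := congrArg φ hB
    simp only [map_add, map_mul, map_sub, map_pow, map_zero, map_ofNat] at hBK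
    rw [Finset.mem_coe, Multiset.mem_toFinset, Polynomial.mem_roots']
    exact ⟨hP0, hProot (φ p.1) (φ p.2) hnK (by linear_combination hAK) (by linear_combination hBK)⟩
  · intro p hp p' hp' h
    have h' : φ p.1 + φ p.2 * i = φ p'.1 + φ p'.2 * i := h
    have h0 : φ (p.1 - p'.1) + φ (p.2 - p'.2) * i = 0 := by
      rw [map_sub, map_sub]
      linear_combination h'
    obtain ⟨e1, e2⟩ := hzero _ _ h0
    exact Prod.ext (sub_eq_zero.mp e1) (sub_eq_zero.mp e2)
  · calc P.roots.toFinset.card ≤ Multiset.card P.roots := P.roots.toFinset_card_le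
      _ ≤ P.natDegree := P.card_roots'
      _ ≤ 6 := hPdeg
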